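/- Let n = 2^(2^p) with p ≥ 1, and partition [n] into 2^(2^(p-1)) blocks each of size 2^(2^(p-1)). Given a weakly 3-suitable family {L_1, ..., L_p} of permutations of a set of size 2^(2^(p-1)), define permutations R_1, ..., R_p of [n] where R_i arranges the elements within each block according to L_i and arranges the blocks among themselves according to L_i, and define R_{p+1} from R_1 by reversing the order of elements within each block while keeping the block order. Then {R_1, ..., R_{p+1}} is a weakly 3-suitable family of permutations of [n]. -/

import Mathlib

/-- A family of strict orders is *3-suitable* if for every three distinct elements
`a b c` and distinguished element `a`, some order places `a` after both `b` and `c`. -/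
def Fam3Suitable {X ι : Type*} (S : ι → X → X → Prop) : Prop :=
  ∀ a b c : X, a ≠ b → a ≠ c → b ≠ c → ∃ i, S i b a ∧ S i c a

/-- A family of strict orders is *weakly 3-suitable* if for every three distinct elements
`a b c` and distinguished element `a`, some order places `a` after both `b` and `c`
or before both `b` and `c`. -/
def FamWeakly3Suitable {X ι : Type*} (S : ι → X → X → Prop) : Prop :=
  ∀ a b c : X, a ≠ b → a ≠ c → b ≠ c →
    ∃ i, (S i b a ∧ S i c a) ∨ (S i a b ∧ S i a c)

/-- Minimum cardinality of a weakly 3-suitable family of permutations of `[n]`. -/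
noncomputable def permOmega (n : ℕ) : ℕ :=
  sInf {k | ∃ S : Fin k → Fin n → Fin n → Prop,
    (∀ i, IsStrictTotalOrder (Fin n) (S i)) ∧ FamWeakly3Suitable S}

/-- Minimum cardinality of a 3-suitable family of permutations of `[n]`. -/
noncomputable def permAlpha (n : ℕ) : ℕ :=
  sInf {k | ∃ S : Fin k → Fin n → Fin n → Prop,
    (∀ i, IsStrictTotalOrder (Fin n) (S i)) ∧ Fam3Suitable S}

/-- Let `n = 2^(2^p) = m * m` with `m = 2^(2^(p-1))`, `p ≥ 1`; identify
`[n]` with `Fin m × Fin m` (first coordinate = block, second = position within block).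
Given a weakly 3-suitable family `L_1, ..., L_p` of orders of a set of size `m`, the orders
`R_i` (blocks ordered by `L_i`, and within each block elements ordered by `L_i`) together
with `R_{p+1}` (obtained from `R_1` by reversing the order inside each block, keeping the
block order) form a weakly 3-suitable family of permutations of `[n]`. -/
theorem block_construction_weakly_3suitable (p : ℕ) (hp : 0 < p)
    (m : ℕ) (hm : m = 2 ^ 2 ^ (p - 1))
    (L : Fin p → Fin m → Fin m → Prop)
    (hL : ∀ i, IsStrictTotalOrder (Fin m) (L i))
    (hws : FamWeakly3Suitable L)
    (R : Fin (p + 1) → Fin m × Fin m → Fin m × Fin m → Prop)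
    (hR : ∀ (i : Fin p) (x y : Fin m × Fin m),
      R i.castSucc x y ↔ (L i x.1 y.1 ∨ (x.1 = y.1 ∧ L i x.2 y.2)))
    (hRlast : ∀ x y : Fin m × Fin m,
      R (Fin.last p) x y ↔ (L ⟨0, hp⟩ x.1 y.1 ∨ (x.1 = y.1 ∧ L ⟨0, hp⟩ y.2 x.2))) :
    FamWeakly3Suitable R := by
  rintro ⟨a1, a2⟩ ⟨b1, b2⟩ ⟨c1, c2⟩ hab hac hbc
  have L0 := hL ⟨0, hp⟩
  have tri : ∀ a b : Fin m, L ⟨0, hp⟩ a b ∨ a = b ∨ L ⟨0, hp⟩ b a := fun a b => by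
    by_contra h; push_neg at h; exact h.2.1 (L0.toTrichotomous.trichotomous a b h.1 h.2.2)
  by_cases h1 : a1 = b1
  · by_cases h2 : a1 = c1
    · -- all three in the same block
      have e1 : a2 ≠ b2 := fun h => hab (by simp [h1, h])
      have e2 : a2 ≠ c2 := fun h => hac (by simp [h2, h])
      have e3 : b2 ≠ c2 := fun h => hbc (by simp [h1 ▸ h2, h])
      obtain ⟨i, hi⟩ := hws a2 b2 c2 e1 e2 e3
      refine ⟨i.castSucc, ?_⟩
      rcases hi with ⟨u, v⟩ | ⟨u, v⟩
      · exact Or.inl ⟨(hR i _ _).2 (Or.inr ⟨h1.symm, u⟩),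
          (hR i _ _).2 (Or.inr ⟨h2.symm, v⟩)⟩
      · exact Or.inr ⟨(hR i _ _).2 (Or.inr ⟨h1, u⟩),
          (hR i _ _).2 (Or.inr ⟨h2, v⟩)⟩
    · -- a,b same block, c different
      have e1 : a2 ≠ b2 := fun h => hab (by simp [h1, h])
      rcases tri a1 c1 with hac1 | hac1 | hac1
      · rcases tri a2 b2 with h' | h' | h'
        · exact ⟨(⟨0, hp⟩ : Fin p).castSucc, Or.inr
            ⟨(hR _ _ _).2 (Or.inr ⟨h1, h'⟩), (hR _ _ _).2 (Or.inl hac1)⟩⟩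
        · exact absurd h' e1
        · exact ⟨Fin.last p, Or.inr
            ⟨(hRlast _ _).2 (Or.inr ⟨h1, h'⟩), (hRlast _ _).2 (Or.inl hac1)⟩⟩
      · exact absurd hac1 h2
      · rcases tri a2 b2 with h' | h' | h'
        · exact ⟨Fin.last p, Or.inl
            ⟨(hRlast _ _).2 (Or.inr ⟨h1.symm, h'⟩), (hRlast _ _).2 (Or.inl hac1)⟩⟩
        · exact absurd h' e1
        · exact ⟨(⟨0, hp⟩ : Fin p).castSucc, Or.inl
            ⟨(hR _ _ _).2 (Or.inr ⟨h1.symm, h'⟩), (hR _ _ _).2 (Or.inl hac1)⟩⟩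
  · by_cases h2 : a1 = c1
    · -- a,c same block, b different
      have e2 : a2 ≠ c2 := fun h => hac (by simp [h2, h])
      rcases tri a1 b1 with hab1 | hab1 | hab1
      · rcases tri a2 c2 with h' | h' | h'
        · exact ⟨(⟨0, hp⟩ : Fin p).castSucc, Or.inr
            ⟨(hR _ _ _).2 (Or.inl hab1), (hR _ _ _).2 (Or.inr ⟨h2, h'⟩)⟩⟩
        · exact absurd h' e2
        · exact ⟨Fin.last p, Or.inr
            ⟨(hRlast _ _).2 (Or.inl hab1), (hRlast _ _).2 (Or.inr ⟨h2, h'⟩)⟩⟩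
      · exact absurd hab1 h1
      · rcases tri a2 c2 with h' | h' | h'
        · exact ⟨Fin.last p, Or.inl
            ⟨(hRlast _ _).2 (Or.inl hab1), (hRlast _ _).2 (Or.inr ⟨h2.symm, h'⟩)⟩⟩
        · exact absurd h' e2
        · exact ⟨(⟨0, hp⟩ : Fin p).castSucc, Or.inl
            ⟨(hR _ _ _).2 (Or.inl hab1), (hR _ _ _).2 (Or.inr ⟨h2.symm, h'⟩)⟩⟩
    · by_cases h3 : b1 = c1
      · -- b,c same block, a different
        rcases tri a1 b1 with hab1 | hab1 | hab1
        · exact ⟨(⟨0, hp⟩ : Fin p).castSucc, Or.inr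
            ⟨(hR _ _ _).2 (Or.inl hab1), (hR _ _ _).2 (Or.inl (h3 ▸ hab1))⟩⟩
        · exact absurd hab1 h1
        · exact ⟨(⟨0, hp⟩ : Fin p).castSucc, Or.inl
            ⟨(hR _ _ _).2 (Or.inl hab1), (hR _ _ _).2 (Or.inl (h3 ▸ hab1))⟩⟩
      · -- all three blocks distinct
        obtain ⟨i, hi⟩ := hws a1 b1 c1 h1 h2 h3
        refine ⟨i.castSucc, ?_⟩
        rcases hi with ⟨u, v⟩ | ⟨u, v⟩
        · exact Or.inl ⟨(hR i _ _).2 (Or.inl u), (hR i _ _).2 (Or.inl v)⟩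
        · exact Or.inr ⟨(hR i _ _).2 (Or.inl u), (hR i _ _).2 (Or.inl v)⟩
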